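/- The geodesic diameter of a regular spherical triangle with side length π/3 equals π/3: for any two points x, y in the (closed, geodesically convex) regular spherical triangle t₁t₂t₃ with sides π/3, the geodesic distance d(x,y) ≤ π/3, with equality attained by pairs of vertices. -/
import Mathlib


open scoped RealInnerProductSpace

/-- Geodesic (angular) distance between points of the unit sphere in `ℝ³`. -/
noncomputable def sdist (x y : EuclideanSpace ℝ (Fin 3)) : ℝ :=
  Real.arccos ⟪x, y⟫

/-- The convex cone spanned by three points (nonnegative combinations). -/
def scone (a b c : EuclideanSpace ℝ (Fin 3)) : Set (EuclideanSpace ℝ (Fin 3)) :=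
  {x | ∃ α β γ : ℝ, 0 ≤ α ∧ 0 ≤ β ∧ 0 ≤ γ ∧ x = α • a + β • b + γ • c}

/-- The closed spherical triangle with vertices `a`, `b`, `c`: the trace on the
unit sphere of the convex cone they span. -/
def sTri (a b c : EuclideanSpace ℝ (Fin 3)) : Set (EuclideanSpace ℝ (Fin 3)) :=
  {x | ‖x‖ = 1 ∧ x ∈ scone a b c}

/-- The (relative) interior of the spherical triangle `abc`: the trace on the
unit sphere of the interior of the cone spanned by `a`, `b`, `c`. -/
def sTriInt (a b c : EuclideanSpace ℝ (Fin 3)) : Set (EuclideanSpace ℝ (Fin 3)) :=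
  {x | ‖x‖ = 1 ∧ x ∈ interior (scone a b c)}

/-- The geodesic segment (minor arc) between unit vectors `a`, `b`: points of
the unit sphere that are nonnegative combinations of `a` and `b`. -/
def sSeg (a b : EuclideanSpace ℝ (Fin 3)) : Set (EuclideanSpace ℝ (Fin 3)) :=
  {x | ‖x‖ = 1 ∧ ∃ α β : ℝ, 0 ≤ α ∧ 0 ≤ β ∧ x = α • a + β • b}

/-- The interior angle of a spherical triangle at the unit vertex `b`, between
the geodesics towards `a` and towards `c`. -/
noncomputable def sAngle (a b c : EuclideanSpace ℝ (Fin 3)) : ℝ :=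
  InnerProductGeometry.angle (a - ⟪a, b⟫ • b) (c - ⟪c, b⟫ • b)

/-- `t₁ t₂ t₃` form the regular spherical triangle `T₀` of side length `π/3`:
unit vectors with pairwise inner products `cos (π/3) = 1/2`. -/
def RegT (t₁ t₂ t₃ : EuclideanSpace ℝ (Fin 3)) : Prop :=
  ‖t₁‖ = 1 ∧ ‖t₂‖ = 1 ∧ ‖t₃‖ = 1 ∧
    ⟪t₁, t₂⟫ = 1/2 ∧ ⟪t₁, t₃⟫ = 1/2 ∧ ⟪t₂, t₃⟫ = 1/2

/-- `v₁ v₂ v₃` is properly placed in the regular triangle `t₁ t₂ t₃`: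
`v₁ = t₁`, `v₂` lies on the segment `[t₁, t₂]`, and `v₃` lies inside the
spherical triangle `t₁ v₂ t₃`. -/
def ProperlyPlaced (t₁ t₂ t₃ v₁ v₂ v₃ : EuclideanSpace ℝ (Fin 3)) : Prop :=
  v₁ = t₁ ∧ v₂ ∈ sSeg t₁ t₂ ∧ v₃ ∈ sTriInt t₁ v₂ t₃

/-- A spherical triangle with side lengths `a = |v₁v₂|`, `b = |v₁v₃|`,
`c = |v₂v₃|` can be properly placed in the regular triangle `T₀`. -/
def Placeable (a b c : ℝ) : Prop :=
  ∃ t₁ t₂ t₃ v₁ v₂ v₃ : EuclideanSpace ℝ (Fin 3),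
    RegT t₁ t₂ t₃ ∧ ‖v₁‖ = 1 ∧ ‖v₂‖ = 1 ∧ ‖v₃‖ = 1 ∧
    sdist v₁ v₂ = a ∧ sdist v₁ v₃ = b ∧ sdist v₂ v₃ = c ∧
    ProperlyPlaced t₁ t₂ t₃ v₁ v₂ v₃

/-- The geodesic diameter of the regular spherical triangle of
side length `π/3` equals `π/3`: any two of its points are at geodesic distance
at most `π/3`, and the bound is attained by a pair of vertices. -/
theorem regular_triangle_geodesic_diameter
    (t₁ t₂ t₃ : EuclideanSpace ℝ (Fin 3)) (ht : RegT t₁ t₂ t₃) :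
    (∀ x ∈ sTri t₁ t₂ t₃, ∀ y ∈ sTri t₁ t₂ t₃, sdist x y ≤ Real.pi / 3) ∧
      sdist t₁ t₂ = Real.pi / 3 := by
  obtain ⟨h1, h2, h3, h12, h13, h23⟩ := ht
  have arccos_half : Real.arccos (1/2) = Real.pi / 3 := by
    rw [show (1/2 : ℝ) = Real.cos (Real.pi/3) by rw [Real.cos_pi_div_three]]
    exact Real.arccos_cos (by positivity) (by linarith [Real.pi_pos])
  have expand : ∀ α β γ α' β' γ' : ℝ,
      ⟪α • t₁ + β • t₂ + γ • t₃, α' • t₁ + β' • t₂ + γ' • t₃⟫ =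
      α*α' + β*β' + γ*γ' + (1/2)*(α*β' + α'*β + α*γ' + α'*γ + β*γ' + β'*γ) := by
    intro α β γ α' β' γ'
    have e1 : ⟪t₁, t₁⟫ = (1:ℝ) := by
      rw [real_inner_self_eq_norm_sq, h1]; norm_num
    have e2 : ⟪t₂, t₂⟫ = (1:ℝ) := by
      rw [real_inner_self_eq_norm_sq, h2]; norm_num
    have e3 : ⟪t₃, t₃⟫ = (1:ℝ) := by
      rw [real_inner_self_eq_norm_sq, h3]; norm_num
    have e21 : ⟪t₂, t₁⟫ = (1/2:ℝ) := by rw [real_inner_comm]; exact h12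
    have e31 : ⟪t₃, t₁⟫ = (1/2:ℝ) := by rw [real_inner_comm]; exact h13
    have e32 : ⟪t₃, t₂⟫ = (1/2:ℝ) := by rw [real_inner_comm]; exact h23
    simp only [inner_add_left, inner_add_right, real_inner_smul_left,
      real_inner_smul_right, e1, e2, e3, e21, e31, e32, h12, h13, h23]
    ring
  have key : ∀ x ∈ sTri t₁ t₂ t₃, ∀ y ∈ sTri t₁ t₂ t₃, (1/2 : ℝ) ≤ ⟪x, y⟫ := by
    rintro x ⟨hx, α, β, γ, hα, hβ, hγ, rfl⟩ y ⟨hy, α', β', γ', hα', hβ', hγ', rfl⟩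
    have hxx : ⟪(α • t₁ + β • t₂ + γ • t₃ : EuclideanSpace ℝ (Fin 3)),
        α • t₁ + β • t₂ + γ • t₃⟫ = (1:ℝ) := by
      rw [real_inner_self_eq_norm_sq, hx]; norm_num
    have hyy : ⟪(α' • t₁ + β' • t₂ + γ' • t₃ : EuclideanSpace ℝ (Fin 3)),
        α' • t₁ + β' • t₂ + γ' • t₃⟫ = (1:ℝ) := by
      rw [real_inner_self_eq_norm_sq, hy]; norm_num
    rw [expand] at hxx hyy ⊢
    have hs : 1 ≤ α + β + γ := by
      nlinarith [mul_nonneg hα hβ, mul_nonneg hα hγ, mul_nonneg hβ hγ,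
        add_nonneg (add_nonneg hα hβ) hγ]
    have hs' : 1 ≤ α' + β' + γ' := by
      nlinarith [mul_nonneg hα' hβ', mul_nonneg hα' hγ', mul_nonneg hβ' hγ',
        add_nonneg (add_nonneg hα' hβ') hγ']
    nlinarith [mul_nonneg hα hα', mul_nonneg hβ hβ', mul_nonneg hγ hγ',
      mul_le_mul hs hs' (by norm_num) (by linarith)]
  constructor
  · intro x hx y hy
    have := key x hx y hy
    calc sdist x y ≤ Real.arccos (1/2) := by
          rw [sdist, Real.arccos, Real.arccos]
          have := Real.monotone_arcsin this
          linarith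
      _ = Real.pi / 3 := arccos_half
  · rw [sdist, h12]; exact arccos_half
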